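/- If I is a stable monomial ideal of k[x_1,...,x_n], then its integral closure Ī is also a stable monomial ideal. -/

import Mathlib

open MvPolynomial

variable {k : Type} [Field k] {n : ℕ}

/-- An ideal of `k[x₁,…,xₙ]` is a *monomial ideal* if it is generated by monomials. -/
def IsMonomialIdeal (I : Ideal (MvPolynomial (Fin n) k)) : Prop :=
  ∃ G : Set (Fin n →₀ ℕ), I = Ideal.span ((fun A => (monomial A (1 : k))) '' G)

/-- The integral closure of an ideal `I`, as a set: all elements `f` satisfying an
equation `f^r + a₁ f^{r-1} + ⋯ + a_r = 0` with `aᵢ ∈ Iⁱ`. -/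
def intCl (I : Ideal (MvPolynomial (Fin n) k)) : Set (MvPolynomial (Fin n) k) :=
  {f | ∃ r : ℕ, 0 < r ∧ ∃ a : ℕ → MvPolynomial (Fin n) k,
    (∀ i, 1 ≤ i → i ≤ r → a i ∈ I ^ i) ∧
    f ^ r + ∑ i ∈ Finset.Icc 1 r, a i * f ^ (r - i) = 0}

/-- The exponent vectors of the minimal monomial generators of a set `T` of polynomials:
those `A` with `x^A ∈ T` minimal in the componentwise (divisibility) order. -/
def minExps (T : Set (MvPolynomial (Fin n) k)) : Set (Fin n →₀ ℕ) :=
  {A | monomial A (1 : k) ∈ T ∧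
    ∀ B : Fin n →₀ ℕ, monomial B (1 : k) ∈ T → B ≤ A → B = A}

/-- A set `T` of polynomials is *stable* if for every monomial `x^A ∈ T`, letting `t` be the
largest index of a variable dividing `x^A`, we have `x_i · x^A / x_t ∈ T` for all `i < t`. -/
def IsStableSet (T : Set (MvPolynomial (Fin n) k)) : Prop :=
  ∀ A : Fin n →₀ ℕ, monomial A (1 : k) ∈ T →
    ∀ t : Fin n, A t ≠ 0 → (∀ s, A s ≠ 0 → s ≤ t) →
      ∀ i, i < t →
        monomial (A + Finsupp.single i 1 - Finsupp.single t 1) (1 : k) ∈ T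

set_option maxHeartbeats 1000000
set_option synthInstance.maxHeartbeats 400000

/-- support lemma: every monomial of an element of a monomial ideal lies in the ideal. -/
theorem mono_mem_of_supp {I : Ideal (MvPolynomial (Fin n) k)} (hI : IsMonomialIdeal I)
    {p : MvPolynomial (Fin n) k} (hp : p ∈ I) {A : Fin n →₀ ℕ} (hA : coeff A p ≠ 0) :
    monomial A (1 : k) ∈ I := by
  obtain ⟨G, rfl⟩ := hI
  rw [Ideal.span, Submodule.mem_span_set] at hp
  obtain ⟨c, hcsupp, hcsum⟩ := hp
  have : coeff A (c.sum fun mi r => r • mi) ≠ 0 := hcsum ▸ hA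
  rw [Finsupp.sum] at this
  have h2 : ∃ q ∈ c.support, coeff A ((c q) • q) ≠ 0 := by
    by_contra h
    push_neg at h
    apply this
    rw [MvPolynomial.coeff_sum]
    exact Finset.sum_eq_zero h
  obtain ⟨q, hq, hcoeff⟩ := h2
  obtain ⟨B, hB, rfl⟩ := hcsupp hq
  rw [smul_eq_mul, coeff_mul_monomial'] at hcoeff
  by_cases hle : B ≤ A
  · have : monomial A (1:k) = monomial (A - B) 1 * monomial B 1 := by
      rw [monomial_mul, one_mul, tsub_add_cancel_of_le hle]
    rw [this]
    exact Ideal.mul_mem_left _ _ (Ideal.subset_span ⟨B, hB, rfl⟩)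
  · simp [hle] at hcoeff

theorem span_mono_mul (G H : Set (Fin n →₀ ℕ)) :
    Ideal.span ((fun A => monomial A (1:k)) '' G) * Ideal.span ((fun A => monomial A (1:k)) '' H)
      = Ideal.span ((fun A => monomial A (1:k)) '' Set.image2 (· + ·) G H) := by
  refine le_antisymm (Ideal.mul_le.2 ?_) (Ideal.span_le.2 ?_)
  · intro r hr s hs
    refine Submodule.span_induction ?_ ?_ ?_ ?_ hr
    · rintro p ⟨A, hA, rfl⟩
      refine Submodule.span_induction ?_ ?_ ?_ ?_ hs
      · rintro q ⟨B, hB, rfl⟩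
        refine Ideal.subset_span ⟨A + B, ⟨A, hA, B, hB, rfl⟩, ?_⟩
        rw [monomial_mul, one_mul]
      · simp
      · intro x y _ _ hx hy; rw [mul_add]; exact Ideal.add_mem _ hx hy
      · intro c x _ hx; rw [mul_smul_comm]; exact Submodule.smul_mem _ _ hx
    · simp
    · intro x y _ _ hx hy; rw [add_mul]; exact Ideal.add_mem _ hx hy
    · intro c x _ hx; rw [smul_mul_assoc]; exact Submodule.smul_mem _ _ hx
  · rintro p ⟨C, ⟨A, hA, B, hB, rfl⟩, rfl⟩
    have : (monomial (A + B) (1:k)) = monomial A 1 * monomial B 1 := by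
      rw [monomial_mul, one_mul]
    show monomial (A + B) (1:k) ∈ _
    rw [this]
    exact Ideal.mul_mem_mul (Ideal.subset_span ⟨A, hA, rfl⟩) (Ideal.subset_span ⟨B, hB, rfl⟩)

theorem IsMonomialIdeal.mul {I J : Ideal (MvPolynomial (Fin n) k)} (hI : IsMonomialIdeal I)
    (hJ : IsMonomialIdeal J) : IsMonomialIdeal (I * J) := by
  obtain ⟨G, rfl⟩ := hI; obtain ⟨H, rfl⟩ := hJ
  exact ⟨Set.image2 (· + ·) G H, span_mono_mul G H⟩

theorem IsMonomialIdeal.pow {I : Ideal (MvPolynomial (Fin n) k)} (hI : IsMonomialIdeal I)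
    (m : ℕ) : IsMonomialIdeal (I ^ m) := by
  induction m with
  | zero =>
    refine ⟨{0}, ?_⟩
    rw [pow_zero, Ideal.one_eq_top]
    rw [Set.image_singleton]
    rw [eq_comm, Ideal.span_singleton_eq_top]
    exact IsUnit.of_mul_eq_one 1 (by simp [monomial_zero'])
  | succ m ih => rw [pow_succ]; exact ih.mul hI

theorem exists_le_of_mono_mem {G : Set (Fin n →₀ ℕ)} {A : Fin n →₀ ℕ}
    (h : monomial A (1 : k) ∈ Ideal.span ((fun B => monomial B (1 : k)) '' G)) :
    ∃ B ∈ G, B ≤ A := by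
  rw [Ideal.span, Submodule.mem_span_set] at h
  obtain ⟨c, hcsupp, hcsum⟩ := h
  have h1 : coeff A (c.sum fun mi r => r • mi) ≠ 0 := by
    rw [hcsum, coeff_monomial]; simp
  rw [Finsupp.sum] at h1
  have h2 : ∃ q ∈ c.support, coeff A ((c q) • q) ≠ 0 := by
    by_contra h
    push_neg at h
    exact h1 (by rw [MvPolynomial.coeff_sum]; exact Finset.sum_eq_zero h)
  obtain ⟨q, hq, hcoeff⟩ := h2
  obtain ⟨B, hB, rfl⟩ := hcsupp hq
  rw [smul_eq_mul, coeff_mul_monomial'] at hcoeff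
  by_cases hle : B ≤ A
  · exact ⟨B, hB, hle⟩
  · simp [hle] at hcoeff

private lemma swap_add_aux (P Q : Fin n →₀ ℕ) (i t : Fin n) (h : P t ≠ 0) :
    (P + Q) + Finsupp.single i 1 - Finsupp.single t 1
      = (P + Finsupp.single i 1 - Finsupp.single t 1) + Q := by
  ext a
  simp only [Finsupp.tsub_apply, Finsupp.add_apply, Finsupp.single_apply]
  rcases eq_or_ne t a with h1 | h1 <;> rcases eq_or_ne i a with h2 | h2 <;>
    simp_all <;> omega

theorem IsStableSet.mul {I J : Ideal (MvPolynomial (Fin n) k)}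
    (hImon : IsMonomialIdeal I) (hJmon : IsMonomialIdeal J)
    (hIst : IsStableSet (I : Set (MvPolynomial (Fin n) k)))
    (hJst : IsStableSet (J : Set (MvPolynomial (Fin n) k))) :
    IsStableSet ((I * J : Ideal (MvPolynomial (Fin n) k)) : Set (MvPolynomial (Fin n) k)) := by
  intro A hA t ht hmax i hit
  obtain ⟨G, hG⟩ := hImon
  obtain ⟨H, hH⟩ := hJmon
  have hA' : monomial A (1:k) ∈ Ideal.span ((fun B => monomial B (1:k)) ''
      Set.image2 (· + ·) G H) := by
    rw [← span_mono_mul, ← hG, ← hH]; exact hA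
  obtain ⟨E, ⟨B, hB, C, hC, rfl⟩, hle⟩ := exists_le_of_mono_mem hA'
  have hBI : monomial B (1:k) ∈ I := hG ▸ Ideal.subset_span ⟨B, hB, rfl⟩
  set D : Fin n →₀ ℕ := A - (B + C) with hD
  have hsum : A = B + (C + D) := by
    rw [hD, ← add_assoc]
    exact (add_tsub_cancel_of_le hle).symm
  have hCDJ : monomial (C + D) (1:k) ∈ J := by
    have : monomial (C + D) (1:k) = monomial D 1 * monomial C 1 := by
      rw [monomial_mul, one_mul, add_comm]
    rw [this]
    exact Ideal.mul_mem_left _ _ (hH ▸ Ideal.subset_span ⟨C, hC, rfl⟩)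
  have hAt : A t = B t + (C + D) t := by rw [hsum]; simp
  by_cases hBt : B t ≠ 0
  · have hB' : monomial (B + Finsupp.single i 1 - Finsupp.single t 1) (1:k) ∈ I := by
      refine hIst B hBI t hBt (fun s hs => hmax s ?_) i hit
      have : B s ≤ A s := by rw [hsum]; simp
      omega
    have heq : A + Finsupp.single i 1 - Finsupp.single t 1
        = (B + Finsupp.single i 1 - Finsupp.single t 1) + (C + D) := by
      rw [hsum]; exact swap_add_aux B (C + D) i t hBt
    rw [heq]
    have : monomial ((B + Finsupp.single i 1 - Finsupp.single t 1) + (C + D)) (1:k)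
        = monomial (B + Finsupp.single i 1 - Finsupp.single t 1) 1 * monomial (C + D) 1 := by
      rw [monomial_mul, one_mul]
    rw [this]
    exact Ideal.mul_mem_mul hB' hCDJ
  · have hCDt : (C + D) t ≠ 0 := by omega
    have hCD' : monomial ((C + D) + Finsupp.single i 1 - Finsupp.single t 1) (1:k) ∈ J := by
      refine hJst (C + D) hCDJ t hCDt (fun s hs => hmax s ?_) i hit
      have : (C + D) s ≤ A s := by rw [hsum]; simp
      omega
    have heq : A + Finsupp.single i 1 - Finsupp.single t 1
        = ((C + D) + Finsupp.single i 1 - Finsupp.single t 1) + B := by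
      rw [hsum, add_comm B (C + D)]
      exact swap_add_aux (C + D) B i t hCDt
    rw [heq]
    have : monomial (((C + D) + Finsupp.single i 1 - Finsupp.single t 1) + B) (1:k)
        = monomial ((C + D) + Finsupp.single i 1 - Finsupp.single t 1) 1 * monomial B 1 := by
      rw [monomial_mul, one_mul]
    rw [this]
    rw [mul_comm I J]
    exact Ideal.mul_mem_mul hCD' hBI

theorem IsStableSet.pow {I : Ideal (MvPolynomial (Fin n) k)}
    (hImon : IsMonomialIdeal I) (hIst : IsStableSet (I : Set (MvPolynomial (Fin n) k)))
    (m : ℕ) (hm : 0 < m) :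
    IsStableSet ((I ^ m : Ideal (MvPolynomial (Fin n) k)) : Set (MvPolynomial (Fin n) k)) := by
  induction m with
  | zero => omega
  | succ m ih =>
    rcases Nat.eq_zero_or_pos m with rfl | hm'
    · simpa using hIst
    · rw [pow_succ]
      exact IsStableSet.mul (hImon.pow m) hImon (ih hm') hIst

theorem smul_le_smul_exp {A : Fin n →₀ ℕ} {i r : ℕ} (h : i ≤ r) : i • A ≤ r • A := by
  intro x
  simp only [Finsupp.smul_apply, smul_eq_mul]
  exact Nat.mul_le_mul_right _ h

theorem smul_sub_smul_exp {A : Fin n →₀ ℕ} {i r : ℕ} (h : i ≤ r) :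
    r • A - (r - i) • A = i • A := by
  ext x
  simp only [Finsupp.tsub_apply, Finsupp.smul_apply, smul_eq_mul]
  rw [← Nat.sub_mul]
  congr 1
  omega

theorem mono_intCl_of_pow {I : Ideal (MvPolynomial (Fin n) k)} {A : Fin n →₀ ℕ} {m : ℕ}
    (hm : 0 < m) (h : monomial (m • A) (1 : k) ∈ I ^ m) :
    monomial A (1 : k) ∈ intCl I := by
  refine ⟨m, hm, fun i => if i = m then -(monomial (m • A) (1:k)) else 0, ?_, ?_⟩
  · intro i h1 h2
    by_cases hi : i = m
    · subst hi; simpa using Submodule.neg_mem _ h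
    · simp [hi]
  · have hsum : ∑ i ∈ Finset.Icc 1 m,
        (if i = m then -(monomial (m • A) (1:k)) else 0) * (monomial A (1:k)) ^ (m - i)
        = -(monomial (m • A) (1:k)) := by
      rw [Finset.sum_eq_single_of_mem m (by simp [hm, Nat.one_le_iff_ne_zero.mpr hm.ne'])]
      · simp
      · intro i _ hi; simp [hi]
    rw [hsum, monomial_pow, one_pow, add_neg_cancel]

theorem exists_pow_of_mono_intCl {I : Ideal (MvPolynomial (Fin n) k)}
    (hI : IsMonomialIdeal I) {A : Fin n →₀ ℕ}
    (h : monomial A (1 : k) ∈ intCl I) :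
    ∃ m, 0 < m ∧ monomial (m • A) (1 : k) ∈ I ^ m := by
  obtain ⟨r, hr, a, ha, heq⟩ := h
  have hco := congrArg (coeff (r • A)) heq
  rw [coeff_add, coeff_zero, MvPolynomial.coeff_sum, monomial_pow, one_pow,
    coeff_monomial] at hco
  simp only [if_pos rfl] at hco
  have hterm : ∀ i ∈ Finset.Icc 1 r,
      coeff (r • A) (a i * (monomial A (1:k)) ^ (r - i)) = coeff (i • A) (a i) := by
    intro i hi
    simp only [Finset.mem_Icc] at hi
    rw [monomial_pow, one_pow, coeff_mul_monomial', if_pos (smul_le_smul_exp (Nat.sub_le r i)),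
      mul_one]
    congr 1
    exact smul_sub_smul_exp hi.2
  rw [Finset.sum_congr rfl hterm] at hco
  have : ∃ i ∈ Finset.Icc 1 r, coeff (i • A) (a i) ≠ 0 := by
    by_contra hcon
    push_neg at hcon
    rw [Finset.sum_eq_zero hcon] at hco
    simpa using hco
  obtain ⟨i, hi, hne⟩ := this
  simp only [Finset.mem_Icc] at hi
  exact ⟨i, hi.1, mono_mem_of_supp (hI.pow i) (ha i hi.1 hi.2) hne⟩

theorem intCl_of_pc {I : Ideal (MvPolynomial (Fin n) k)} {f c : MvPolynomial (Fin n) k}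
    (hc : c ≠ 0) (h : ∀ m, c * f ^ m ∈ I ^ m) : f ∈ intCl I := by
  set R' := reesAlgebra I
  set e : ℕ → R' := fun m => ⟨Polynomial.monomial m (c * f ^ m),
    reesAlgebra.monomial_mem.2 (h m)⟩ with he
  set lmap := Algebra.linearMap R' (Polynomial (MvPolynomial (Fin n) k)) with hlmap
  set N : Submodule R' (Polynomial (MvPolynomial (Fin n) k)) :=
    Submodule.span R' (Set.range fun m => Polynomial.monomial m (c * f ^ m)) with hN
  have hset : (Set.range fun m => Polynomial.monomial m (c * f ^ m))
      = lmap '' Set.range e := by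
    ext q
    constructor
    · rintro ⟨m, rfl⟩; exact ⟨e m, ⟨m, rfl⟩, rfl⟩
    · rintro ⟨z, ⟨m, rfl⟩, rfl⟩; exact ⟨m, rfl⟩
  have hNmap : N = Submodule.map lmap (Submodule.span R' (Set.range e)) := by
    rw [Submodule.map_span, ← hset]
  have hNfg : N.FG := by
    rw [hNmap]
    exact (IsNoetherian.noetherian _).map _
  have hNbot : N ≠ ⊥ := by
    rw [Submodule.ne_bot_iff]
    refine ⟨Polynomial.monomial 0 (c * f ^ 0), Submodule.subset_span ⟨0, rfl⟩, ?_⟩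
    simp only [pow_zero, mul_one]
    simpa using hc
  have hkey : ∀ m : ℕ, (Polynomial.C f * Polynomial.X) * Polynomial.monomial m (c * f ^ m)
      = Polynomial.monomial (m + 1) (c * f ^ (m + 1)) := by
    intro m
    rw [mul_comm (Polynomial.C f) Polynomial.X, mul_assoc, Polynomial.C_mul_monomial,
      Polynomial.X_mul, Polynomial.monomial_mul_X]
    congr 1
    ring
  have hx : ∀ y ∈ N, (Polynomial.C f * Polynomial.X) • y ∈ N := by
    intro y hy
    refine Submodule.span_induction ?_ ?_ ?_ ?_ hy
    · rintro q ⟨m, rfl⟩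
      exact Submodule.subset_span ⟨m + 1, by rw [smul_eq_mul, hkey]⟩
    · rw [smul_zero]; exact Submodule.zero_mem _
    · intro a b _ _ ha hb; rw [smul_add]; exact Submodule.add_mem _ ha hb
    · intro r' a _ ha
      rw [smul_comm]
      exact Submodule.smul_mem _ _ ha
  have hInt : IsIntegral R' (Polynomial.C f * Polynomial.X) :=
    isIntegral_of_smul_mem_submodule N hNbot hNfg _ hx
  obtain ⟨p, pmonic, hp⟩ := hInt
  set r := p.natDegree with hr
  have hrpos : 0 < r := by
    rcases Nat.eq_zero_or_pos r with h0 | h0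
    · exfalso
      have : p = 1 := (pmonic.natDegree_eq_zero).1 h0
      rw [this] at hp
      simp at hp
    · exact h0
  rw [Polynomial.eval₂_eq_sum_range] at hp
  have hco := congrArg (fun q => Polynomial.coeff q r) hp
  simp only [Polynomial.finset_sum_coeff, Polynomial.coeff_zero] at hco
  have hterm : ∀ j ∈ Finset.range (r + 1),
      (algebraMap R' (Polynomial (MvPolynomial (Fin n) k)) (p.coeff j)
        * (Polynomial.C f * Polynomial.X) ^ j).coeff r
      = ((p.coeff j : Polynomial (MvPolynomial (Fin n) k))).coeff (r - j) * f ^ j := by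
    intro j hj
    simp only [Finset.mem_range] at hj
    rw [mul_pow, ← Polynomial.C_pow, ← mul_assoc, Polynomial.coeff_mul_X_pow',
      if_pos (by omega : j ≤ r), Polynomial.coeff_mul_C]
    rfl
  rw [Finset.sum_congr rfl hterm, Finset.sum_range_succ] at hco
  have hlead : ((p.coeff r : Polynomial (MvPolynomial (Fin n) k))).coeff (r - r) * f ^ r
      = f ^ r := by
    rw [Nat.sub_self]
    have h1 : p.coeff r = 1 := pmonic.coeff_natDegree
    rw [h1, OneMemClass.coe_one, Polynomial.coeff_one]
    simp
  rw [hlead] at hco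
  refine ⟨r, hrpos, fun i => ((p.coeff (r - i) : Polynomial (MvPolynomial (Fin n) k))).coeff i,
    ?_, ?_⟩
  · intro i h1 h2
    exact (p.coeff (r - i)).2 i
  · rw [← hco, add_comm]
    congr 1
    refine Finset.sum_bij' (fun i _ => r - i) (fun j _ => r - j) ?_ ?_ ?_ ?_ ?_
    · intro i hi; simp only [Finset.mem_Icc] at hi; simp only [Finset.mem_range]; omega
    · intro j hj; simp only [Finset.mem_range] at hj; simp only [Finset.mem_Icc]; omega
    · intro i hi; simp only [Finset.mem_Icc] at hi; omega
    · intro j hj; simp only [Finset.mem_range] at hj; omega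
    · intro i hi
      simp only [Finset.mem_Icc] at hi
      have h2 : r - (r - i) = i := by omega
      rw [h2]

/-- The "valuative" predicate: some nonzero `c` multiplies all powers of `f` into `I^m`. -/
def Pc (I : Ideal (MvPolynomial (Fin n) k)) (f : MvPolynomial (Fin n) k) : Prop :=
  ∃ c : MvPolynomial (Fin n) k, c ≠ 0 ∧ ∀ m, c * f ^ m ∈ I ^ m

theorem Pc.zero {I : Ideal (MvPolynomial (Fin n) k)} : Pc I 0 := by
  refine ⟨1, one_ne_zero, fun m => ?_⟩
  rcases Nat.eq_zero_or_pos m with rfl | hm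
  · simp
  · rw [zero_pow hm.ne', mul_zero]
    exact Submodule.zero_mem _

theorem Pc.add {I : Ideal (MvPolynomial (Fin n) k)} {f g : MvPolynomial (Fin n) k}
    (hf : Pc I f) (hg : Pc I g) : Pc I (f + g) := by
  obtain ⟨c₁, hc₁, h₁⟩ := hf
  obtain ⟨c₂, hc₂, h₂⟩ := hg
  refine ⟨c₁ * c₂, mul_ne_zero hc₁ hc₂, fun m => ?_⟩
  rw [add_pow, Finset.mul_sum]
  refine Submodule.sum_mem _ fun j hj => ?_
  simp only [Finset.mem_range] at hj
  have hmem : (c₁ * f ^ j) * (c₂ * g ^ (m - j)) ∈ I ^ m := by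
    have h3 := Ideal.mul_mem_mul (h₁ j) (h₂ (m - j))
    rwa [← pow_add, show j + (m - j) = m from by omega] at h3
  have hre : c₁ * c₂ * (f ^ j * g ^ (m - j) * ((m.choose j : ℕ) : MvPolynomial (Fin n) k))
      = ((m.choose j : ℕ) : MvPolynomial (Fin n) k) * ((c₁ * f ^ j) * (c₂ * g ^ (m - j))) := by
    ring
  rw [hre]
  exact Ideal.mul_mem_left _ _ hmem

theorem Pc.smul {I : Ideal (MvPolynomial (Fin n) k)} {f r : MvPolynomial (Fin n) k}
    (hf : Pc I f) : Pc I (r * f) := by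
  obtain ⟨c, hc, h⟩ := hf
  refine ⟨c, hc, fun m => ?_⟩
  have : c * (r * f) ^ m = r ^ m * (c * f ^ m) := by rw [mul_pow]; ring
  rw [this]
  exact Ideal.mul_mem_left _ _ (h m)

theorem pc_of_intCl {I : Ideal (MvPolynomial (Fin n) k)}
    (hI : IsMonomialIdeal I) {f : MvPolynomial (Fin n) k} (hf : f ∈ intCl I) : Pc I f := by
  obtain ⟨r, hr, a, ha, heq⟩ := hf
  by_cases hf0 : f = 0
  · exact hf0 ▸ Pc.zero
  have hIbot : I ≠ ⊥ := by
    rintro rfl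
    have hz : ∀ i ∈ Finset.Icc 1 r, a i * f ^ (r - i) = 0 := by
      intro i hi
      simp only [Finset.mem_Icc] at hi
      have : a i ∈ (⊥ : Ideal (MvPolynomial (Fin n) k)) := by
        have := ha i hi.1 hi.2
        rwa [← Ideal.zero_eq_bot, zero_pow (by omega : i ≠ 0)] at this
      rw [Submodule.mem_bot] at this
      rw [this, zero_mul]
    rw [Finset.sum_eq_zero hz, add_zero, pow_eq_zero_iff hr.ne'] at heq
    exact hf0 heq
  obtain ⟨p, hpI, hp0⟩ := Submodule.exists_mem_ne_zero_of_ne_bot hIbot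
  obtain ⟨U, hU⟩ := MvPolynomial.ne_zero_iff.1 hp0
  have hUin : monomial U (1 : k) ∈ I := mono_mem_of_supp hI hpI hU
  set c : MvPolynomial (Fin n) k := monomial ((r - 1) • U) 1 with hcdef
  have hc0 : c ≠ 0 := by
    rw [hcdef, Ne, MvPolynomial.monomial_eq_zero]
    exact one_ne_zero
  have hcmem : c ∈ I ^ (r - 1) := by
    have := Ideal.pow_mem_pow hUin (r - 1)
    rwa [monomial_pow, one_pow] at this
  refine ⟨c, hc0, fun M => ?_⟩
  induction M using Nat.strong_induction_on with
  | _ M ih =>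
    by_cases hM : M ≤ r - 1
    · rw [mul_comm]
      exact Ideal.mul_mem_left _ _ (Ideal.pow_le_pow_right hM hcmem)
    · have hMr : r ≤ M := by omega
      have hfr : f ^ r = ∑ i ∈ Finset.Icc 1 r, -(a i * f ^ (r - i)) := by
        rw [Finset.sum_neg_distrib]
        exact eq_neg_of_add_eq_zero_left heq
      have hsplit : c * f ^ M = ∑ i ∈ Finset.Icc 1 r, -(a i) * (c * f ^ (M - i)) := by
        have h1 : f ^ M = f ^ (M - r) * f ^ r := by
          rw [← pow_add]
          congr 1
          omega
        rw [h1, hfr, Finset.mul_sum, Finset.mul_sum]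
        refine Finset.sum_congr rfl fun i hi => ?_
        simp only [Finset.mem_Icc] at hi
        have h2 : f ^ (M - r) * f ^ (r - i) = f ^ (M - i) := by
          rw [← pow_add]
          congr 1
          omega
        rw [← h2]
        ring
      rw [hsplit]
      refine Submodule.sum_mem _ fun i hi => ?_
      simp only [Finset.mem_Icc] at hi
      have hmem := Ideal.mul_mem_mul (Submodule.neg_mem _ (ha i hi.1 hi.2))
        (ih (M - i) (by omega))
      rwa [← pow_add, show i + (M - i) = M from by omega] at hmem

open scoped Classical in
noncomputable def minexp (p : MvPolynomial (Fin n) k) : Fin n →₀ ℕ :=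
  if h : p = 0 then 0
  else ofLex ((p.support.image toLex).min'
    (Finset.image_nonempty.2 (MvPolynomial.support_nonempty.2 h)))

theorem minexp_mem {p : MvPolynomial (Fin n) k} (hp : p ≠ 0) : coeff (minexp p) p ≠ 0 := by
  rw [minexp, dif_neg hp]
  have := (p.support.image toLex).min'_mem
    (Finset.image_nonempty.2 (MvPolynomial.support_nonempty.2 hp))
  rw [Finset.mem_image] at this
  obtain ⟨B, hB, hBeq⟩ := this
  rw [← hBeq]
  simpa using MvPolynomial.mem_support_iff.1 hB

theorem minexp_min {p : MvPolynomial (Fin n) k} (hp : p ≠ 0) {B : Fin n →₀ ℕ}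
    (hB : B ∈ p.support) : toLex (minexp p) ≤ toLex B := by
  rw [minexp, dif_neg hp]
  exact (p.support.image toLex).min'_le _ (Finset.mem_image_of_mem _ hB)

theorem coeff_add_min {p q : MvPolynomial (Fin n) k} {V W : Fin n →₀ ℕ}
    (hpmin : ∀ B ∈ p.support, toLex V ≤ toLex B)
    (hqmin : ∀ B ∈ q.support, toLex W ≤ toLex B) :
    coeff (V + W) (p * q) = coeff V p * coeff W q := by
  classical
  rw [coeff_mul]
  refine Finset.sum_eq_single_of_mem (V, W) (Finset.HasAntidiagonal.mem_antidiagonal.2 rfl) ?_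
  rintro ⟨c, d⟩ hmem hne
  rw [Finset.HasAntidiagonal.mem_antidiagonal] at hmem
  by_contra hnz
  have hc : coeff c p ≠ 0 := fun h => hnz (by simp [h])
  have hd : coeff d q ≠ 0 := fun h => hnz (by simp [h])
  have hcm : toLex V ≤ toLex c := hpmin c (MvPolynomial.mem_support_iff.2 hc)
  have hdm : toLex W ≤ toLex d := hqmin d (MvPolynomial.mem_support_iff.2 hd)
  have hcV : c = V := by
    by_contra hcV
    have hlt : toLex V < toLex c := lt_of_le_of_ne hcm (fun h => hcV (toLex.injective h.symm))
    have : toLex (V + W) < toLex (c + d) := by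
      have h2 : toLex V + toLex W < toLex c + toLex d :=
        add_lt_add_of_lt_of_le hlt hdm
      exact h2
    rw [hmem] at this
    exact lt_irrefl _ this
  subst hcV
  have hdW : d = W := add_left_cancel (show c + d = c + W from hmem)
  exact hne (by rw [hdW])

theorem pow_min {f : MvPolynomial (Fin n) k} (hf : f ≠ 0) (m : ℕ) :
    coeff (m • minexp f) (f ^ m) = (coeff (minexp f) f) ^ m ∧
      ∀ B ∈ (f ^ m).support, toLex (m • minexp f) ≤ toLex B := by
  induction m with
  | zero =>
    constructor
    · simp
    · intro B hB
      rw [pow_zero] at hB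
      have h1 : coeff B (1 : MvPolynomial (Fin n) k) ≠ 0 := MvPolynomial.mem_support_iff.1 hB
      rcases eq_or_ne B 0 with rfl | hB0
      · rw [zero_smul]
      · exfalso
        apply h1
        have : (1 : MvPolynomial (Fin n) k) = monomial 0 1 := by
          rw [monomial_zero']
          simp
        rw [this, coeff_monomial, if_neg (fun h => hB0 h.symm)]
  | succ m ih =>
    have hco : coeff ((m + 1) • minexp f) (f ^ (m + 1))
        = coeff (m • minexp f) (f ^ m) * coeff (minexp f) f := by
      rw [succ_nsmul, pow_succ]
      exact coeff_add_min ih.2 (fun B hB => minexp_min hf hB)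
    constructor
    · rw [hco, ih.1, pow_succ]
    · intro B hB
      rw [pow_succ] at hB
      have := MvPolynomial.support_mul _ _ hB
      rw [Finset.mem_add] at this
      obtain ⟨c, hc, d, hd, rfl⟩ := this
      rw [succ_nsmul]
      exact add_le_add (ih.2 c hc) (minexp_min hf hd)

theorem pc_mono_minexp {I : Ideal (MvPolynomial (Fin n) k)} (hI : IsMonomialIdeal I)
    {f : MvPolynomial (Fin n) k} (hf : f ≠ 0) (hpc : Pc I f) :
    Pc I (monomial (minexp f) (1 : k)) := by
  obtain ⟨c, hc, h⟩ := hpc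
  have hmem : ∀ m, monomial (minexp c + m • minexp f) (1 : k) ∈ I ^ m := by
    intro m
    refine mono_mem_of_supp (hI.pow m) (h m) ?_
    rw [coeff_add_min (fun B hB => minexp_min hc hB) (pow_min hf m).2, (pow_min hf m).1]
    exact mul_ne_zero (minexp_mem hc) (pow_ne_zero _ (minexp_mem hf))
  refine ⟨monomial (minexp c) 1, ?_, fun m => ?_⟩
  · rw [Ne, MvPolynomial.monomial_eq_zero]; exact one_ne_zero
  · rw [monomial_pow, one_pow, monomial_mul, one_mul]
    exact hmem m

theorem pc_mem_span {I : Ideal (MvPolynomial (Fin n) k)} (hI : IsMonomialIdeal I) :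
    ∀ f : MvPolynomial (Fin n) k, Pc I f →
      f ∈ Ideal.span ((fun A => monomial A (1 : k)) ''
        {A : Fin n →₀ ℕ | monomial A (1 : k) ∈ intCl I}) := by
  suffices h : ∀ (N : ℕ) (f : MvPolynomial (Fin n) k), f.support.card ≤ N → Pc I f →
      f ∈ Ideal.span ((fun A => monomial A (1 : k)) ''
        {A : Fin n →₀ ℕ | monomial A (1 : k) ∈ intCl I}) by
    exact fun f hf => h f.support.card f le_rfl hf
  intro N
  induction N with
  | zero =>
    intro f hcard _
    have : f = 0 := by
      rw [← MvPolynomial.support_eq_empty]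
      exact Finset.card_eq_zero.1 (Nat.le_zero.1 hcard)
    rw [this]
    exact Submodule.zero_mem _
  | succ N ih =>
    intro f hcard hpc
    by_cases hf0 : f = 0
    · rw [hf0]; exact Submodule.zero_mem _
    set A := minexp f with hA
    have hAsupp : A ∈ f.support := MvPolynomial.mem_support_iff.2 (minexp_mem hf0)
    have hApc : Pc I (monomial A (1 : k)) := pc_mono_minexp hI hf0 hpc
    have hAint : monomial A (1 : k) ∈ intCl I := by
      obtain ⟨c, hc, h⟩ := hApc
      exact intCl_of_pc hc h
    have hAJ : monomial A (1 : k) ∈ Ideal.span ((fun A => monomial A (1 : k)) ''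
        {A : Fin n →₀ ℕ | monomial A (1 : k) ∈ intCl I}) :=
      Ideal.subset_span ⟨A, hAint, rfl⟩
    set f' := f - monomial A (coeff A f) with hf'
    have hf'supp : f'.support = f.support.erase A := by
      ext B
      simp only [Finset.mem_erase, MvPolynomial.mem_support_iff, hf',
        MvPolynomial.coeff_sub, MvPolynomial.coeff_monomial]
      rcases eq_or_ne B A with rfl | hBA
      · simp
      · rw [if_neg (fun h => hBA h.symm)]
        simp [hBA]
    have hmono : (monomial A (coeff A f) : MvPolynomial (Fin n) k)
        = C (coeff A f) * monomial A 1 := by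
      rw [MvPolynomial.C_mul_monomial, mul_one]
    have hf'pc : Pc I f' := by
      have h1 : Pc I ((-(C (coeff A f))) * monomial A (1 : k)) := Pc.smul hApc
      have h2 := Pc.add hpc h1
      have h3 : f + (-(C (coeff A f))) * monomial A (1 : k) = f' := by
        rw [hf', hmono]
        ring
      rwa [h3] at h2
    have hf'card : f'.support.card ≤ N := by
      rw [hf'supp]
      have := Finset.card_erase_of_mem hAsupp
      omega
    have hf'J := ih f' hf'card hf'pc
    have h4 : f = f' + monomial A (coeff A f) := by rw [hf']; ring
    rw [h4]
    refine Submodule.add_mem _ hf'J ?_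
    rw [hmono]
    exact Ideal.mul_mem_left _ _ hAJ

/-- The integral closure of a stable monomial ideal is a stable
monomial ideal. -/
theorem intCl_stable (I : Ideal (MvPolynomial (Fin n) k))
    (hI : IsMonomialIdeal I) (hst : IsStableSet (I : Set (MvPolynomial (Fin n) k))) :
    (∃ J : Ideal (MvPolynomial (Fin n) k),
        (J : Set (MvPolynomial (Fin n) k)) = intCl I ∧ IsMonomialIdeal J) ∧
      IsStableSet (intCl I) := by

  constructor
  · refine ⟨Ideal.span ((fun A => monomial A (1 : k)) ''
      {A : Fin n →₀ ℕ | monomial A (1 : k) ∈ intCl I}), ?_,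
      ⟨{A : Fin n →₀ ℕ | monomial A (1 : k) ∈ intCl I}, rfl⟩⟩
    apply Set.Subset.antisymm
    · intro f hf
      have hpc : Pc I f := by
        refine Submodule.span_induction ?_ ?_ ?_ ?_ hf
        · rintro p ⟨A, hA, rfl⟩
          exact pc_of_intCl hI hA
        · exact Pc.zero
        · intro a b _ _ ha hb; exact Pc.add ha hb
        · intro r a _ ha; rw [smul_eq_mul]; exact Pc.smul ha
      obtain ⟨c, hc, h⟩ := hpc
      exact intCl_of_pc hc h
    · intro f hf
      exact pc_mem_span hI f (pc_of_intCl hI hf)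
  · intro A hA t ht hmax i hit
    obtain ⟨m, hm, hpow⟩ := exists_pow_of_mono_intCl hI hA
    have hstable := IsStableSet.pow hI hst m hm
    have hmAt : m ≤ m * A t := Nat.le_mul_of_pos_right m (Nat.pos_of_ne_zero ht)
    have hstep : ∀ j, j ≤ m →
        monomial (m • A + Finsupp.single i j - Finsupp.single t j) (1 : k) ∈ I ^ m := by
      intro j
      induction j with
      | zero => intro _; simpa using hpow
      | succ j ihj =>
        intro hj
        have hBp := ihj (by omega)
        set B := m • A + Finsupp.single i j - Finsupp.single t j with hB
        have hBt : B t ≠ 0 := by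
          rw [hB]
          simp [Finsupp.tsub_apply, Finsupp.add_apply, Finsupp.smul_apply,
            Finsupp.single_apply, hit.ne]
          omega
        have hBmax : ∀ s, B s ≠ 0 → s ≤ t := by
          intro s hs
          rw [hB] at hs
          simp only [Finsupp.tsub_apply, Finsupp.add_apply, Finsupp.smul_apply,
            Finsupp.single_apply, smul_eq_mul] at hs
          rcases eq_or_ne i s with rfl | his
          · exact hit.le
          · rw [if_neg his] at hs
            refine hmax s fun h0 => ?_
            rw [h0] at hs
            simp at hs
        have hout := hstable B hBp t hBt hBmax i hit
        have heq : B + Finsupp.single i 1 - Finsupp.single t 1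
            = m • A + Finsupp.single i (j + 1) - Finsupp.single t (j + 1) := by
          rw [hB]
          ext s
          rcases eq_or_ne s i with rfl | hsi
          · have htne : t ≠ s := fun h => hit.ne h.symm
            simp [Finsupp.tsub_apply, Finsupp.add_apply, Finsupp.smul_apply,
              Finsupp.single_apply, htne]
            omega
          · rcases eq_or_ne s t with rfl | hst
            · simp [Finsupp.tsub_apply, Finsupp.add_apply, Finsupp.smul_apply,
                Finsupp.single_apply, hit.ne]
              omega
            · simp [Finsupp.tsub_apply, Finsupp.add_apply, Finsupp.smul_apply,
                Finsupp.single_apply, Ne.symm hsi, Ne.symm hst]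
        rwa [heq] at hout
    have hfinal := hstep m le_rfl
    have heq2 : m • A + Finsupp.single i m - Finsupp.single t m
        = m • (A + Finsupp.single i 1 - Finsupp.single t 1) := by
      ext s
      rcases eq_or_ne s i with rfl | hsi
      · have htne : t ≠ s := fun h => hit.ne h.symm
        simp [Finsupp.tsub_apply, Finsupp.add_apply, Finsupp.smul_apply,
          Finsupp.single_apply, htne, Nat.mul_add]
      · rcases eq_or_ne s t with rfl | hst
        · simp [Finsupp.tsub_apply, Finsupp.add_apply, Finsupp.smul_apply,
            Finsupp.single_apply, hit.ne, Nat.mul_sub]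
        · simp [Finsupp.tsub_apply, Finsupp.add_apply, Finsupp.smul_apply,
            Finsupp.single_apply, Ne.symm hsi, Ne.symm hst]
    rw [heq2] at hfinal
    exact mono_intCl_of_pow hm hfinal
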